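/- Let z : [0,∞) → ℝ be nonnegative with z(0)=0, and suppose z is locally Lipschitz and at every point of differentiability z'(θ) ≤ f(θ) − ν whenever z(θ) > 0, where f is integrable with ∫₀^∞ max(f(s) − ν, 0) ds < ∞ and f(θ) ≤ ν for all θ ≥ T for some T ≥ 0. Then z is bounded on [0,∞). -/

import Mathlib

open MeasureTheory Set Filter intervalIntegral NNReal Topology

/-- Glue two Lipschitz bounds on adjacent closed intervals. -/
lemma lipschitzOnWith_Icc_glue {w : ℝ → ℝ} {K₁ K₂ : ℝ≥0} {c m e : ℝ}
    (h1 : LipschitzOnWith K₁ w (Icc c m)) (h2 : LipschitzOnWith K₂ w (Icc m e))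
    (hcm : c ≤ m) (hme : m ≤ e) :
    LipschitzOnWith (max K₁ K₂) w (Icc c e) := by
  rw [lipschitzOnWith_iff_dist_le_mul] at h1 h2 ⊢
  have key : ∀ x ∈ Icc c e, ∀ y ∈ Icc c e, x ≤ y →
      dist (w x) (w y) ≤ (max K₁ K₂ : ℝ≥0) * dist x y := by
    intro x hx y hy hxy
    have hK1 : (K₁ : ℝ) ≤ (max K₁ K₂ : ℝ≥0) := by exact_mod_cast le_max_left K₁ K₂
    have hK2 : (K₂ : ℝ) ≤ (max K₁ K₂ : ℝ≥0) := by exact_mod_cast le_max_right K₁ K₂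
    rcases le_total y m with hym | hmy
    · calc dist (w x) (w y) ≤ K₁ * dist x y :=
            h1 x ⟨hx.1, hxy.trans hym⟩ y ⟨hy.1, hym⟩
        _ ≤ _ := by apply mul_le_mul_of_nonneg_right hK1 dist_nonneg
    · rcases le_total m x with hmx | hxm
      · calc dist (w x) (w y) ≤ K₂ * dist x y :=
              h2 x ⟨hmx, hx.2⟩ y ⟨hmx.trans hxy, hy.2⟩
          _ ≤ _ := by apply mul_le_mul_of_nonneg_right hK2 dist_nonneg
      · have d1 : dist (w x) (w m) ≤ K₁ * dist x m :=
          h1 x ⟨hx.1, hxm⟩ m ⟨hcm, le_rfl⟩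
        have d2 : dist (w m) (w y) ≤ K₂ * dist m y :=
          h2 m ⟨le_rfl, hme⟩ y ⟨hmy, hy.2⟩
        have hdx : dist x m = m - x := by rw [Real.dist_eq, abs_of_nonpos (by linarith)]; ring
        have hdy : dist m y = y - m := by rw [Real.dist_eq, abs_of_nonpos (by linarith)]; ring
        have hdxy : dist x y = y - x := by rw [Real.dist_eq, abs_of_nonpos (by linarith)]; ring
        calc dist (w x) (w y) ≤ dist (w x) (w m) + dist (w m) (w y) := dist_triangle _ _ _
          _ ≤ K₁ * dist x m + K₂ * dist m y := add_le_add d1 d2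
          _ ≤ (max K₁ K₂ : ℝ≥0) * dist x m + (max K₁ K₂ : ℝ≥0) * dist m y := by
              apply add_le_add <;> apply mul_le_mul_of_nonneg_right (by assumption) dist_nonneg
          _ = (max K₁ K₂ : ℝ≥0) * (dist x m + dist m y) := by ring
          _ = (max K₁ K₂ : ℝ≥0) * dist x y := by rw [hdx, hdy, hdxy]; ring_nf
  intro x hx y hy
  rcases le_total x y with hxy | hyx
  · exact key x hx y hy hxy
  · rw [dist_comm (w x), dist_comm x]; exact key y hy x hx hyx

/-- A locally Lipschitz real function is Lipschitz on every compact interval. -/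
lemma LocallyLipschitz.exists_lipschitzOnWith_Icc {w : ℝ → ℝ} (h : LocallyLipschitz w)
    (c d : ℝ) : ∃ K : ℝ≥0, LipschitzOnWith K w (Icc c d) := by
  have hsingle : ∀ x : ℝ, LipschitzOnWith 1 w (Icc x x) := by
    intro x
    intro u hu v hv
    simp only [Icc_self, mem_singleton_iff] at hu hv
    simp [hu, hv]
  rcases le_or_gt d c with hdc | hcd
  · rcases eq_or_lt_of_le hdc with rfl | hlt
    · exact ⟨1, hsingle d⟩
    · refine ⟨1, ?_⟩
      have : Icc c d = ∅ := Icc_eq_empty (not_le.mpr hlt)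
      rw [this]; exact lipschitzOnWith_empty 1 w
  · set S : Set ℝ := {x | x ∈ Icc c d ∧ ∃ K : ℝ≥0, LipschitzOnWith K w (Icc c x)} with hS
    have hcS : c ∈ S := ⟨⟨le_rfl, hcd.le⟩, 1, hsingle c⟩
    have hSne : S.Nonempty := ⟨c, hcS⟩
    have hSbdd : BddAbove S := ⟨d, fun x hx => hx.1.2⟩
    set s := sSup S with hs
    have hcs : c ≤ s := le_csSup hSbdd hcS
    have hsd : s ≤ d := csSup_le hSne (fun x hx => hx.1.2)
    obtain ⟨K₂, t, ht, hK₂⟩ := h s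
    obtain ⟨ε, hε, hball⟩ := Metric.mem_nhds_iff.1 ht
    have hK₂' : LipschitzOnWith K₂ w (Icc (s - ε/2) (s + ε/2)) := by
      apply hK₂.mono
      intro u hu
      apply hball
      rw [Metric.mem_ball, Real.dist_eq]
      rw [abs_lt]
      constructor <;> [linarith [hu.1]; linarith [hu.2]]
    obtain ⟨x, hxS, hxgt⟩ := exists_lt_of_lt_csSup hSne (show s - ε/2 < s by linarith)
    have hxs : x ≤ s := le_csSup hSbdd hxS
    obtain ⟨K₁, hK₁⟩ := hxS.2
    have hcx : c ≤ x := hxS.1.1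
    set e := min d (s + ε/2) with he
    have hxe : x ≤ e := le_min hxS.1.2 (by linarith)
    have hglue : LipschitzOnWith (max K₁ K₂) w (Icc c e) := by
      apply lipschitzOnWith_Icc_glue hK₁ _ hcx hxe
      apply hK₂'.mono
      apply Icc_subset_Icc (by linarith) (min_le_right _ _)
    rcases le_or_gt d (s + ε/2) with hde | hed
    · refine ⟨max K₁ K₂, ?_⟩
      rwa [he, min_eq_left hde] at hglue
    · exfalso
      have heS : e ∈ S := ⟨⟨hcx.trans hxe, min_le_left _ _⟩, max K₁ K₂, hglue⟩
      have : e ≤ s := le_csSup hSbdd heS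
      rw [he, min_eq_right hed.le] at this
      linarith

/-- FTC for Lipschitz functions: `w b - w a = ∫ deriv w`. -/
lemma LipschitzWith.sub_eq_integral_deriv {w : ℝ → ℝ} {K : ℝ≥0} (hw : LipschitzWith K w)
    (a b : ℝ) : w b - w a = ∫ t in a..b, deriv w t := by
  have hwc : Continuous w := hw.continuous
  set h : ℕ → ℝ := fun n => (1:ℝ)/(n+1) with hh
  have hpos : ∀ n : ℕ, 0 < h n := fun n => by positivity
  have htend0 : Tendsto h atTop (𝓝 0) := tendsto_one_div_add_atTop_nhds_zero_nat
  -- limit of averages at any point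
  have key : ∀ c : ℝ, Tendsto (fun n => (∫ t in c..(c + h n), w t) / h n) atTop (𝓝 (w c)) := by
    intro c
    have hF : HasDerivAt (fun u => ∫ t in c..u, w t) (w c) c :=
      integral_hasDerivAt_right (hwc.intervalIntegrable _ _)
        (hwc.stronglyMeasurable.stronglyMeasurableAtFilter) hwc.continuousAt
    have hslope := hasDerivAt_iff_tendsto_slope.1 hF
    have hseq : Tendsto (fun n => c + h n) atTop (𝓝[≠] c) := by
      apply tendsto_nhdsWithin_of_tendsto_nhds_of_eventually_within
      · simpa using tendsto_const_nhds.add htend0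
      · exact Eventually.of_forall (fun n => by
          simp only [mem_compl_iff, mem_singleton_iff]
          have := hpos n; intro hcon; nlinarith)
    have := hslope.comp hseq
    convert this using 2 with n
    rw [Function.comp_apply, slope_def_field]
    simp [div_eq_div_iff (hpos n).ne']
  -- the sequence of difference quotients
  set F : ℕ → ℝ → ℝ := fun n t => (w (t + h n) - w t) / h n with hF
  have claim1 : ∀ n, (∫ t in a..b, F n t)
      = (∫ t in b..(b + h n), w t) / h n - (∫ t in a..(a + h n), w t) / h n := by
    intro n
    have int1 : IntervalIntegrable (fun t => w (t + h n)) volume a b :=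
      (hwc.comp (continuous_add_right _)).intervalIntegrable _ _
    have int2 : IntervalIntegrable w volume a b := hwc.intervalIntegrable _ _
    have e1 : (∫ t in a..b, F n t)
        = ((∫ t in a..b, w (t + h n)) - ∫ t in a..b, w t) / h n := by
      rw [← intervalIntegral.integral_sub int1 int2]
      simp only [hF]
      rw [intervalIntegral.integral_div]
    rw [e1, intervalIntegral.integral_comp_add_right]
    have c1 : (∫ t in a..(a + h n), w t) + (∫ t in (a + h n)..b, w t) = ∫ t in a..b, w t :=
      intervalIntegral.integral_add_adjacent_intervals
        (hwc.intervalIntegrable _ _) (hwc.intervalIntegrable _ _)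
    have c2 : (∫ t in (a + h n)..b, w t) + (∫ t in b..(b + h n), w t)
        = ∫ t in (a + h n)..(b + h n), w t :=
      intervalIntegral.integral_add_adjacent_intervals
        (hwc.intervalIntegrable _ _) (hwc.intervalIntegrable _ _)
    field_simp
    congr 1
    linarith [c1, c2]
  have lim1 : Tendsto (fun n => ∫ t in a..b, F n t) atTop (𝓝 (w b - w a)) := by
    simp only [claim1]
    exact (key b).sub (key a)
  have lim2 : Tendsto (fun n => ∫ t in a..b, F n t) atTop (𝓝 (∫ t in a..b, deriv w t)) := by
    apply intervalIntegral.tendsto_integral_filter_of_dominated_convergence (fun _ => (K : ℝ))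
    · apply Eventually.of_forall
      intro n
      exact (((hwc.comp (continuous_add_right _)).sub hwc).div_const _).aestronglyMeasurable.restrict
    · apply Eventually.of_forall
      intro n
      apply ae_of_all
      intro x _
      have hb : |w (x + h n) - w x| ≤ (K : ℝ) * h n := by
        have := hw.dist_le_mul (x + h n) x
        rw [Real.dist_eq, Real.dist_eq] at this
        simpa [abs_of_pos (hpos n)] using this
      rw [Real.norm_eq_abs, abs_div, abs_of_pos (hpos n), div_le_iff₀ (hpos n)]
      linarith
    · exact intervalIntegrable_const
    · have hae := hw.ae_differentiableAt_real
      filter_upwards [hae] with x hx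
      intro _
      have hd := hx.hasDerivAt
      have hslope := hasDerivAt_iff_tendsto_slope.1 hd
      have hseq : Tendsto (fun n => x + h n) atTop (𝓝[≠] x) := by
        apply tendsto_nhdsWithin_of_tendsto_nhds_of_eventually_within
        · simpa using tendsto_const_nhds.add htend0
        · exact Eventually.of_forall (fun n => by
            simp only [mem_compl_iff, mem_singleton_iff]
            have := hpos n; intro hcon; nlinarith)
      have := hslope.comp hseq
      convert this using 2 with n
      rw [Function.comp_apply, slope_def_field]
      simp [hF, div_eq_div_iff (hpos n).ne']
  exact tendsto_nhds_unique lim1 lim2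

/-- Comparison form of FTC for Lipschitz functions. -/
lemma lipschitz_sub_le_integral {w φ : ℝ → ℝ} {K : ℝ≥0} (hw : LipschitzWith K w)
    {a b : ℝ} (hab : a ≤ b) (hφ : IntegrableOn φ (Icc a b))
    (hd : ∀ t ∈ Ioo a b, deriv w t ≤ φ t) :
    w b - w a ≤ ∫ t in a..b, φ t := by
  rw [hw.sub_eq_integral_deriv a b]
  have hbound : ∀ t, ‖deriv w t‖ ≤ (K : ℝ) := by
    intro t
    by_cases hdiff : DifferentiableAt ℝ w t
    · exact hdiff.hasDerivAt.le_of_lipschitz hw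
    · simp [deriv_zero_of_not_differentiableAt hdiff]
  have hderiv_int : IntervalIntegrable (deriv w) volume a b := by
    apply IntervalIntegrable.mono_fun' (g := fun _ => (K : ℝ)) intervalIntegrable_const
    · exact (measurable_deriv w).aestronglyMeasurable.restrict
    · exact ae_of_all _ hbound
  have hφ_int : IntervalIntegrable φ volume a b := by
    apply IntegrableOn.intervalIntegrable
    rwa [uIcc_of_le hab]
  apply intervalIntegral.integral_mono_ae_restrict hab hderiv_int hφ_int
  have hnull : (volume : Measure ℝ) ({a, b} : Set ℝ) = 0 :=
    Set.Countable.measure_zero (Set.to_countable _) _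
  have h1 : ∀ᵐ t ∂((volume : Measure ℝ).restrict (Icc a b)), t ∉ ({a, b} : Set ℝ) :=
    ae_restrict_of_ae (measure_eq_zero_iff_ae_notMem.1 hnull)
  have h2 : ∀ᵐ t ∂((volume : Measure ℝ).restrict (Icc a b)), t ∈ Icc a b :=
    ae_restrict_mem measurableSet_Icc
  filter_upwards [h1, h2] with t ht1 ht2
  apply hd
  simp only [mem_insert_iff, mem_singleton_iff, not_or] at ht1
  exact ⟨lt_of_le_of_ne ht2.1 (Ne.symm ht1.1), lt_of_le_of_ne ht2.2 ht1.2⟩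

/-- A queue fed by an inflow that eventually never exceeds the service
capacity `ν`, with finite total excess inflow, remains bounded. -/
theorem queue_remains_bounded
    (z f : ℝ → ℝ) (ν T : ℝ)
    (hz_nonneg : ∀ θ, 0 ≤ θ → 0 ≤ z θ) (hz0 : z 0 = 0)
    (hlip : LocallyLipschitz z)
    (hderiv : ∀ θ, 0 ≤ θ → DifferentiableAt ℝ z θ → 0 < z θ →
      deriv z θ ≤ f θ - ν)
    (hf_int : IntegrableOn f (Ici 0))
    (hexcess_int : IntegrableOn (fun s => max (f s - ν) 0) (Ici 0))
    (hT : 0 ≤ T) (hev : ∀ θ, T ≤ θ → f θ ≤ ν) :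
    ∃ B : ℝ, ∀ θ, 0 ≤ θ → z θ ≤ B := by
  set g : ℝ → ℝ := fun s => max (f s - ν) 0 with hg
  have hg_nonneg : ∀ s, 0 ≤ g s := fun s => le_max_right _ _
  refine ⟨∫ s in Ici (0:ℝ), g s, ?_⟩
  intro θ hθ
  -- Lipschitz constant on a neighborhood of [0, θ]
  obtain ⟨K, hK⟩ := hlip.exists_lipschitzOnWith_Icc (-1) (θ + 1)
  obtain ⟨w, hw, hwz⟩ := hK.extend_real
  have hweq : ∀ t ∈ Icc (-1 : ℝ) (θ + 1), w t = z t := fun t ht => (hwz ht).symm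
  -- derivative bound for the extension
  have hd : ∀ t ∈ Ioo (0:ℝ) θ, deriv w t ≤ g t := by
    intro t ht
    have htmem : Ioo (-1 : ℝ) (θ + 1) ∈ nhds t := by
      apply IsOpen.mem_nhds isOpen_Ioo
      constructor <;> [linarith [ht.1]; linarith [ht.2]]
    have hev_eq : w =ᶠ[nhds t] z := by
      filter_upwards [htmem] with u hu
      exact hweq u ⟨hu.1.le, hu.2.le⟩
    by_cases hdiff : DifferentiableAt ℝ z t
    · have hwdiff : deriv w t = deriv z t := hev_eq.deriv_eq
      rw [hwdiff]
      rcases lt_or_eq_of_le (hz_nonneg t ht.1.le) with hzt | hzt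
      · exact (hderiv t ht.1.le hdiff hzt).trans (le_max_left _ _)
      · -- z t = 0 is a local minimum
        have hmin : IsLocalMin z t := by
          have : ∀ᶠ u in nhds t, 0 ≤ u := Filter.Tendsto.eventually_const_lt ht.1
            (Filter.tendsto_id) |>.mono (fun u hu => hu.le)
          filter_upwards [this] with u hu
          rw [← hzt]
          exact hz_nonneg u hu
        rw [hmin.deriv_eq_zero]
        exact hg_nonneg t
    · have hwnot : ¬ DifferentiableAt ℝ w t := by
        intro hcon
        exact hdiff (hcon.congr_of_eventuallyEq hev_eq.symm)
      rw [deriv_zero_of_not_differentiableAt hwnot]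
      exact hg_nonneg t
  have hgint : IntegrableOn g (Icc 0 θ) :=
    hexcess_int.mono_set (Icc_subset_Ici_self)
  have hmain : w θ - w 0 ≤ ∫ t in (0:ℝ)..θ, g t :=
    lipschitz_sub_le_integral hw hθ hgint hd
  have hw0 : w 0 = z 0 := hweq 0 ⟨by linarith, by linarith⟩
  have hwθ : w θ = z θ := hweq θ ⟨by linarith, by linarith⟩
  rw [hw0, hwθ, hz0, sub_zero] at hmain
  refine hmain.trans ?_
  rw [intervalIntegral.integral_of_le hθ]
  apply setIntegral_mono_set hexcess_int
  · exact ae_of_all _ hg_nonneg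
  · exact HasSubset.Subset.eventuallyLE (fun x hx => le_of_lt hx.1)
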